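/- For any triangle ABC and interior point M, the distance from M to vertex A satisfies MA·sin(A) ≥ d_b·sin(C) + d_c·sin(B) — equivalently a·MA ≥ b·d_b + c·d_c — the key lemma in Mordell's proof of the Erdős–Mordell theorem. -/

import Mathlib

open EuclideanGeometry Metric

local notation "⟪" x ", " y "⟫" => @inner ℝ _ _ x y

private abbrev V2 := EuclideanSpace ℝ (Fin 2)

private lemma aux_infDist_line (P Q M n : V2) (hQP : Q ≠ P) (hn : ‖n‖ = 1)
    (horth : ⟪Q - P, n⟫ = 0) :
    infDist M (affineSpan ℝ ({P, Q} : Set V2) : Set V2) = |⟪M - P, n⟫| := by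
  have hnn : ⟪n, n⟫ = 1 := by rw [real_inner_self_eq_norm_sq, hn]; norm_num
  have hspan : (ℝ ∙ (Q - P)) = (ℝ ∙ n)ᗮ := by
    apply Submodule.eq_of_le_of_finrank_eq
    · rw [Submodule.span_singleton_le_iff_mem]
      exact Submodule.mem_orthogonal_singleton_iff_inner_left.2 horth
    · have h1 : Module.finrank ℝ (ℝ ∙ (Q - P)) = 1 :=
        finrank_span_singleton (sub_ne_zero.2 hQP)
      have h2 : Module.finrank ℝ (ℝ ∙ n) = 1 :=
        finrank_span_singleton (by intro h; rw [h] at hn; simp at hn)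
      have h3 := Submodule.finrank_add_finrank_orthogonal (K := (ℝ ∙ n : Submodule ℝ V2))
      have h4 : Module.finrank ℝ V2 = 2 := finrank_euclideanSpace_fin
      rw [h1]
      omega
  have hPmem : P ∈ (affineSpan ℝ ({P, Q} : Set V2) : Set V2) :=
    left_mem_affineSpan_pair ℝ P Q
  apply le_antisymm
  · have hFmem : M - ⟪M - P, n⟫ • n ∈ (affineSpan ℝ ({P, Q} : Set V2) : Set V2) := by
      have h0 : (M - ⟪M - P, n⟫ • n) - P ∈ (ℝ ∙ n)ᗮ := by
        rw [Submodule.mem_orthogonal_singleton_iff_inner_right]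
        have : (M - ⟪M - P, n⟫ • n) - P = (M - P) - ⟪M - P, n⟫ • n := by abel
        rw [this, inner_sub_right, real_inner_smul_right, hnn, real_inner_comm]
        ring
      rw [← hspan, Submodule.mem_span_singleton] at h0
      obtain ⟨r, hr⟩ := h0
      have : M - ⟪M - P, n⟫ • n = r • (Q - P) +ᵥ P := by
        rw [hr]; simp
      rw [this]
      exact smul_vsub_vadd_mem_affineSpan_pair r P Q
    calc infDist M (affineSpan ℝ ({P, Q} : Set V2) : Set V2)
        ≤ dist M (M - ⟪M - P, n⟫ • n) := infDist_le_dist_of_mem hFmem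
      _ = |⟪M - P, n⟫| := by
          rw [dist_eq_norm]
          simp [norm_smul, hn, abs_of_nonneg]
  · haveI : Nonempty (affineSpan ℝ ({P, Q} : Set V2) : Set V2) := ⟨⟨P, hPmem⟩⟩
    rw [infDist_eq_iInf]
    apply le_ciInf
    rintro ⟨p, hp⟩
    have hdir : p - P ∈ ℝ ∙ (Q - P) := by
      have h := AffineSubspace.vsub_mem_direction hp hPmem
      rwa [direction_affineSpan, vectorSpan_pair_rev] at h
    obtain ⟨r, hr⟩ := Submodule.mem_span_singleton.1 hdir
    have hinner : ⟪M - p, n⟫ = ⟪M - P, n⟫ := by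
      have h : M - p = (M - P) - (p - P) := by abel
      rw [h, inner_sub_left, ← hr, real_inner_smul_left, horth]
      ring
    calc |⟪M - P, n⟫| = |⟪M - p, n⟫| := by rw [hinner]
      _ ≤ ‖M - p‖ * ‖n‖ := abs_real_inner_le_norm _ _
      _ = dist M p := by rw [hn, mul_one, dist_eq_norm]

private lemma aux_halfplane {s : Set V2} {n A M : V2} (hM : M ∈ convexHull ℝ s)
    (h : ∀ p ∈ s, 0 ≤ ⟪p - A, n⟫) : 0 ≤ ⟪M - A, n⟫ := by
  have hlin : IsLinearMap ℝ (fun x : V2 => ⟪x, n⟫) :=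
    ⟨fun x y => inner_add_left x y n, fun c x => real_inner_smul_left x n c⟩
  have hsub := convexHull_min (t := {x : V2 | ⟪A, n⟫ ≤ ⟪x, n⟫})
    (fun p hp => by simpa [inner_sub_left, sub_nonneg] using h p hp)
    (convex_halfSpace_ge hlin (⟪A, n⟫)) hM
  simpa [inner_sub_left, sub_nonneg] using hsub

theorem mordell_key_lemma
    (A B C M : EuclideanSpace ℝ (Fin 2))
    (hABC : AffineIndependent ℝ ![A, B, C])
    (hM : M ∈ interior (convexHull ℝ ({A, B, C} : Set (EuclideanSpace ℝ (Fin 2))))) :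
    dist M A * Real.sin (∠ B A C) ≥
      infDist M (affineSpan ℝ ({C, A} : Set (EuclideanSpace ℝ (Fin 2))) : Set _) *
        Real.sin (∠ B C A) +
      infDist M (affineSpan ℝ ({A, B} : Set (EuclideanSpace ℝ (Fin 2))) : Set _) *
        Real.sin (∠ A B C) := by
  have hncol : ¬Collinear ℝ ({A, B, C} : Set V2) :=
    affineIndependent_iff_not_collinear_set.1 hABC
  have hBA : B ≠ A := by
    intro h; apply hncol
    rw [h]; exact (collinear_pair ℝ A C).subset (by simp [Set.insert_subset_iff])
  have hCA : C ≠ A := by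
    intro h; apply hncol
    rw [h]; exact (collinear_pair ℝ A B).subset (by simp [Set.insert_subset_iff])
  have hncolBAC : ¬Collinear ℝ ({B, A, C} : Set V2) := by
    intro h; apply hncol
    have : ({A, B, C} : Set V2) = {B, A, C} := by
      rw [Set.insert_comm]
    rwa [this]
  set u : V2 := B - A with hu
  set w : V2 := C - A with hw
  set c : ℝ := ‖u‖ with hcdef
  set b : ℝ := ‖w‖ with hbdef
  have hc : 0 < c := by simpa [hcdef] using sub_ne_zero.2 hBA
  have hb : 0 < b := by simpa [hbdef] using sub_ne_zero.2 hCA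
  set t : ℝ := Real.cos (∠ B A C) with htdef
  set s : ℝ := Real.sin (∠ B A C) with hsdef
  have hangle : ∠ B A C = InnerProductGeometry.angle u w := by
    rw [EuclideanGeometry.angle, vsub_eq_sub, vsub_eq_sub]
  have hs : 0 < s := sin_pos_of_not_collinear hncolBAC
  have hst : s ^ 2 + t ^ 2 = 1 := Real.sin_sq_add_cos_sq _
  have huw : ⟪u, w⟫ = t * (c * b) := by
    rw [htdef, hangle, ← InnerProductGeometry.cos_angle_mul_norm_mul_norm]
  have huu : ⟪u, u⟫ = c ^ 2 := real_inner_self_eq_norm_sq u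
  have hww : ⟪w, w⟫ = b ^ 2 := real_inner_self_eq_norm_sq w
  have hwu : ⟪w, u⟫ = t * (c * b) := by rw [real_inner_comm, huw]
  set nb : V2 := s⁻¹ • (c⁻¹ • u - t • b⁻¹ • w) with hnb
  set nc : V2 := s⁻¹ • (b⁻¹ • w - t • c⁻¹ • u) with hnc
  -- inner product facts
  have h1 : ⟪w, nb⟫ = 0 := by
    simp only [hnb, inner_sub_right, real_inner_smul_right, huw, hwu, hww, huu]
    field_simp
    ring
  have h2 : ⟪u, nc⟫ = 0 := by
    simp only [hnc, inner_sub_right, real_inner_smul_right, huw, hwu, hww, huu]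
    field_simp
    ring
  have h6 : ⟪u, nb⟫ = c * s := by
    simp only [hnb, inner_sub_right, real_inner_smul_right, huw, hwu, hww, huu]
    field_simp
    linear_combination (-1 : ℝ) * hst
  have h7 : ⟪w, nc⟫ = b * s := by
    simp only [hnc, inner_sub_right, real_inner_smul_right, huw, hwu, hww, huu]
    field_simp
    linear_combination (-1 : ℝ) * hst
  have h3 : ⟪nb, nb⟫ = 1 := by
    simp only [hnb, inner_sub_left, inner_sub_right, real_inner_smul_left,
      real_inner_smul_right, huw, hwu, hww, huu]
    field_simp
    linear_combination (-1 : ℝ) * hst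
  have h4 : ⟪nc, nc⟫ = 1 := by
    simp only [hnc, inner_sub_left, inner_sub_right, real_inner_smul_left,
      real_inner_smul_right, huw, hwu, hww, huu]
    field_simp
    linear_combination (-1 : ℝ) * hst
  have h5 : ⟪nb, nc⟫ = -t := by
    simp only [hnb, hnc, inner_sub_left, inner_sub_right, real_inner_smul_left,
      real_inner_smul_right, huw, hwu, hww, huu]
    field_simp
    linear_combination t * hst
  -- norms of the unit normals
  have hnbnorm : ‖nb‖ = 1 := by
    have h0 : ‖nb‖ ^ 2 = 1 := by rw [← real_inner_self_eq_norm_sq, h3]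
    rw [← Real.sqrt_one, ← h0, Real.sqrt_sq (norm_nonneg nb)]
  have hncnorm : ‖nc‖ = 1 := by
    have h0 : ‖nc‖ ^ 2 = 1 := by rw [← real_inner_self_eq_norm_sq, h4]
    rw [← Real.sqrt_one, ← h0, Real.sqrt_sq (norm_nonneg nc)]
  -- M is in the convex hull
  have hMhull : M ∈ convexHull ℝ ({A, B, C} : Set V2) := interior_subset hM
  have hx : 0 ≤ ⟪M - A, nb⟫ := by
    refine aux_halfplane hMhull ?_
    rintro p hp
    rcases hp with rfl | rfl | rfl
    · simp
    · rw [← hu, h6]; positivity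
    · rw [← hw, h1]
  have hy : 0 ≤ ⟪M - A, nc⟫ := by
    refine aux_halfplane hMhull ?_
    rintro p hp
    rcases hp with rfl | rfl | rfl
    · simp
    · rw [← hu, h2]
    · rw [← hw, h7]; positivity
  -- the two distances
  have hdb : infDist M (affineSpan ℝ ({C, A} : Set V2) : Set V2) = ⟪M - A, nb⟫ := by
    have horth : ⟪A - C, nb⟫ = 0 := by
      have hAC : A - C = -w := by rw [hw]; abel
      rw [hAC, inner_neg_left, h1, neg_zero]
    rw [aux_infDist_line C A M nb hCA.symm hnbnorm horth]
    have hMC : M - C = (M - A) - w := by rw [hw]; abel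
    rw [hMC, inner_sub_left, h1, sub_zero, abs_of_nonneg hx]
  have hdc : infDist M (affineSpan ℝ ({A, B} : Set V2) : Set V2) = ⟪M - A, nc⟫ := by
    have horth : ⟪B - A, nc⟫ = 0 := by rw [← hu, h2]
    rw [aux_infDist_line A B M nc hBA hncnorm horth, abs_of_nonneg hy]
  -- angle sum and the trig identity
  have hsum := EuclideanGeometry.angle_add_angle_add_angle_eq_pi (p₁ := A) C hBA
  have hcomm : ∠ C A B = ∠ B A C := EuclideanGeometry.angle_comm C A B
  have hBAC : ∠ B A C = Real.pi - (∠ A B C + ∠ B C A) := by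
    rw [← hcomm]; linarith
  have hsβγ : s = Real.sin (∠ A B C + ∠ B C A) := by
    rw [hsdef, hBAC, Real.sin_pi_sub]
  have htβγ : t = -Real.cos (∠ A B C + ∠ B C A) := by
    rw [htdef, hBAC, Real.cos_pi_sub]
  have hid : Real.sin (∠ B C A) ^ 2 + Real.sin (∠ A B C) ^ 2
      - 2 * Real.sin (∠ A B C) * Real.sin (∠ B C A) * t = s ^ 2 := by
    rw [hsβγ, htβγ, Real.sin_add, Real.cos_add]
    linear_combination (-(Real.sin (∠ B C A) ^ 2)) * Real.sin_sq_add_cos_sq (∠ A B C)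
      + (-(Real.sin (∠ A B C) ^ 2)) * Real.sin_sq_add_cos_sq (∠ B C A)
  -- the combined vector
  set v : V2 := Real.sin (∠ B C A) • nb + Real.sin (∠ A B C) • nc with hv
  have h5' : ⟪nc, nb⟫ = -t := by rw [real_inner_comm]; exact h5
  have hvv : ⟪v, v⟫ = s ^ 2 := by
    simp only [hv, inner_add_left, inner_add_right, real_inner_smul_left,
      real_inner_smul_right, h3, h4, h5, h5']
    linear_combination hid
  have hvnorm : ‖v‖ = s := by
    have h0 : ‖v‖ ^ 2 = s ^ 2 := by rw [← real_inner_self_eq_norm_sq, hvv]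
    rw [← Real.sqrt_sq (norm_nonneg v), h0, Real.sqrt_sq hs.le]
  have hexp : ⟪M - A, v⟫
      = ⟪M - A, nb⟫ * Real.sin (∠ B C A) + ⟪M - A, nc⟫ * Real.sin (∠ A B C) := by
    simp only [hv, inner_add_right, real_inner_smul_right]
    ring
  rw [ge_iff_le, hdb, hdc]
  calc ⟪M - A, nb⟫ * Real.sin (∠ B C A) + ⟪M - A, nc⟫ * Real.sin (∠ A B C)
      = ⟪M - A, v⟫ := hexp.symm
    _ ≤ ‖M - A‖ * ‖v‖ := real_inner_le_norm _ _
    _ = dist M A * s := by rw [hvnorm, dist_eq_norm]
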